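/- Let U ⊆ A^{ℤ²} be an additive shift space, let Ω = {Ω(n)}_{n≥1} be an expanding system of finite subsets of ℤ², and let {T(n)}_{n≥1} be a sequence of tessellations of ℤ² with Ω(n) ⊂ T(n); set Ω'(n) = T(n) \ Ω(n). If limsup_{n→∞} |∂Ω(n)|/|Ω(n)| = 0, limsup_{n→∞} |∂Ω'(n)|/|Ω'(n)| = 0, and sup_{n≥1} |Ω'(n)|/|Ω(n)| < ∞, then h_Ω(U) = h_r(U). -/

import Mathlib

open Filter
open scoped Classical

/-- The `m × n` rectangular lattice `Z_{m×n}(p)` with bottom-left corner `p`. -/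
def Zrect (m n : ℕ) (p : ℤ × ℤ) : Finset (ℤ × ℤ) :=
  (Finset.range m ×ˢ Finset.range n).image (fun ab => (p.1 + (ab.1 : ℤ), p.2 + (ab.2 : ℤ)))

/-- The number of patterns of `U` seen on the finite window `L`. -/
noncomputable def patternCount {A : Type*} (U : Set ((ℤ × ℤ) → A)) (L : Finset (ℤ × ℤ)) : ℕ :=
  Set.ncard ((fun x => fun p : L => x (p : ℤ × ℤ)) '' U)

/-- An additive shift space: nonempty, closed, translation invariant. -/
def IsShiftSpace {A : Type*} [TopologicalSpace A] (U : Set ((ℤ × ℤ) → A)) : Prop :=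
  U.Nonempty ∧ IsClosed U ∧ ∀ v : ℤ × ℤ, ∀ x ∈ U, (fun p => x (p + v)) ∈ U

/-- An expanding system of finite sublattices of `ℤ²`. -/
def IsExpandingSystem (Ω : ℕ → Finset (ℤ × ℤ)) : Prop :=
  (∀ n, Ω n ⊂ Ω (n + 1)) ∧ ∀ p : ℤ × ℤ, ∃ n, p ∈ Ω n

/-- The interior of a finite lattice. -/
def latInterior (L : Finset (ℤ × ℤ)) : Finset (ℤ × ℤ) :=
  L.filter (fun p => (p.1 + 1, p.2) ∈ L ∧ (p.1, p.2 + 1) ∈ L ∧ (p.1 + 1, p.2 + 1) ∈ L)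

/-- The boundary of a finite lattice. -/
def latBoundary (L : Finset (ℤ × ℤ)) : Finset (ℤ × ℤ) := L \ latInterior L

/-- The rectangular entropy `h_r(U)`. -/
noncomputable def rectEntropy {A : Type*} (U : Set ((ℤ × ℤ) → A)) : ℝ :=
  ⨅ mn : ℕ × ℕ, (1 / (((mn.1 + 1) * (mn.2 + 1) : ℕ) : ℝ)) *
    Real.log (patternCount U (Zrect (mn.1 + 1) (mn.2 + 1) (0, 0)))

/-- The entropy `h_Ω(U)` along an expanding system `Ω`. -/
noncomputable def entropyAlong {A : Type*} (U : Set ((ℤ × ℤ) → A)) (Ω : ℕ → Finset (ℤ × ℤ)) : ℝ :=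
  Filter.limsup (fun n => (1 / ((Ω n).card : ℝ)) * Real.log (patternCount U (Ω n))) Filter.atTop

/-- `Ω_{k,l}(n)`: the union of grid rectangles `Z_{k×l}((ak,bl))` contained in `L`. -/
noncomputable def gridPart (k l : ℕ) (L : Finset (ℤ × ℤ)) : Finset (ℤ × ℤ) :=
  L.filter (fun p => ∃ a b : ℤ,
    p ∈ Zrect k l ((k : ℤ) * a, (l : ℤ) * b) ∧ Zrect k l ((k : ℤ) * a, (l : ℤ) * b) ⊆ L)

/-- `β_{k,l}` : the size of the complement of the grid part. -/
noncomputable def betaKL (k l : ℕ) (L : Finset (ℤ × ℤ)) : ℕ := (L \ gridPart k l L).card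

/-- `α_{k,l}` : the number of grid rectangles contained in `L`. -/
noncomputable def alphaKL (k l : ℕ) (L : Finset (ℤ × ℤ)) : ℕ :=
  Set.ncard {ab : ℤ × ℤ | Zrect k l ((k : ℤ) * ab.1, (l : ℤ) * ab.2) ⊆ L}

/-- A tessellation of `ℤ²`. -/
def IsTessellation (T : Finset (ℤ × ℤ)) : Prop :=
  ∃ v : ℕ → ℤ × ℤ,
    (∀ i j : ℕ, i ≠ j → Disjoint (T.image (· + v i)) (T.image (· + v j))) ∧
    ∀ p : ℤ × ℤ, ∃ i : ℕ, p ∈ T.image (· + v i)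

/-- Euclidean distance between points of `ℤ²`. -/
noncomputable def euclDist (p q : ℤ × ℤ) : ℝ :=
  Real.sqrt (((p.1 - q.1 : ℤ) : ℝ) ^ 2 + ((p.2 - q.2 : ℤ) : ℝ) ^ 2)

/-- Block gluing with gap `M`. -/
def BlockGluingWithGap {A : Type*} (U : Set ((ℤ × ℤ) → A)) (M : ℕ) : Prop :=
  ∀ (m₁ n₁ m₂ n₂ : ℕ) (c₁ c₂ : ℤ × ℤ),
    (∀ p ∈ Zrect m₁ n₁ c₁, ∀ q ∈ Zrect m₂ n₂ c₂, (M : ℝ) ≤ euclDist p q) →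
    ∀ x₁ ∈ U, ∀ x₂ ∈ U, ∃ x ∈ U,
      (∀ p ∈ Zrect m₁ n₁ c₁, x p = x₁ p) ∧ ∀ q ∈ Zrect m₂ n₂ c₂, x q = x₂ q

/-- Block gluing. -/
def IsBlockGluing {A : Type*} (U : Set ((ℤ × ℤ) → A)) : Prop :=
  ∃ M : ℕ, 1 ≤ M ∧ BlockGluingWithGap U M

/-- A full shift on a sub-alphabet. -/
def IsFullShift {A : Type*} (U : Set ((ℤ × ℤ) → A)) : Prop :=
  ∃ B : Set A, U = {x | ∀ p : ℤ × ℤ, x p ∈ B}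

/-- Shift of finite type. -/
def IsSFT {A : Type*} (U : Set ((ℤ × ℤ) → A)) : Prop :=
  ∃ (F : Finset (ℤ × ℤ)) (P : Set (F → A)),
    U = {x | ∀ v : ℤ × ℤ, (fun p : F => x (v + (p : ℤ × ℤ))) ∈ P}

/-- `(i,j)` has horizontal length `m` in `L`. -/
def HasHorizLength (L : Finset (ℤ × ℤ)) (p : ℤ × ℤ) (m : ℕ) : Prop :=
  1 ≤ m ∧ (∃ c : ℤ × ℤ, p ∈ Zrect m 1 c ∧ Zrect m 1 c ⊆ L) ∧
    ∀ m' : ℕ, m < m' → ¬ ∃ c : ℤ × ℤ, p ∈ Zrect m' 1 c ∧ Zrect m' 1 c ⊆ L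

/-- `(i,j)` has vertical length `m` in `L`. -/
def HasVertLength (L : Finset (ℤ × ℤ)) (p : ℤ × ℤ) (m : ℕ) : Prop :=
  1 ≤ m ∧ (∃ c : ℤ × ℤ, p ∈ Zrect 1 m c ∧ Zrect 1 m c ⊆ L) ∧
    ∀ m' : ℕ, m < m' → ¬ ∃ c : ℤ × ℤ, p ∈ Zrect 1 m' c ∧ Zrect 1 m' c ⊆ L

noncomputable def betaHoriz (m : ℕ) (L : Finset (ℤ × ℤ)) : ℕ :=
  (L.filter (fun p => HasHorizLength L p m)).card

noncomputable def betaVert (m : ℕ) (L : Finset (ℤ × ℤ)) : ℕ :=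
  (L.filter (fun p => HasVertLength L p m)).card

/-- The one-dimensional sublattice segment `{s • v : 0 ≤ s ≤ n-1}`. -/
def lineSegment (v : ℤ × ℤ) (n : ℕ) : Finset (ℤ × ℤ) :=
  (Finset.range n).image (fun s : ℕ => ((s : ℤ) * v.1, (s : ℤ) * v.2))

/-- The projectional entropy along the one-dimensional sublattice generated by `v`. -/
noncomputable def projEntropy {A : Type*} (U : Set ((ℤ × ℤ) → A)) (v : ℤ × ℤ) : ℝ :=
  ⨅ n : ℕ, (1 / (n + 1 : ℝ)) * Real.log (patternCount U (lineSegment v (n + 1)))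

/-- `ĥ⁽¹⁾(U)`: supremum of projectional entropies over one-dimensional sublattices. -/
noncomputable def hHatOne {A : Type*} (U : Set ((ℤ × ℤ) → A)) : ℝ :=
  ⨆ v : {w : ℤ × ℤ // w ≠ 0}, projEntropy U (v : ℤ × ℤ)

/-- The horizontal golden-mean shift. -/
def goldenMeanShift : Set ((ℤ × ℤ) → Fin 2) :=
  {x | ∀ p : ℤ × ℤ, x p * x (p.1 + 1, p.2) = 0}

/-- The sequence `a_k`: `a_1 = 2`, `a_2 = 3`, `a_k = a_{k-1} + a_{k-2}`. -/
def aSeq : ℕ → ℕ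
  | 0 => 1
  | 1 => 2
  | (k + 2) => aSeq (k + 1) + aSeq k



section Aux
lemma mem_Zrect {m n : ℕ} {p q : ℤ × ℤ} :
    q ∈ Zrect m n p ↔ p.1 ≤ q.1 ∧ q.1 < p.1 + m ∧ p.2 ≤ q.2 ∧ q.2 < p.2 + n := by
  simp only [Zrect, Finset.mem_image, Finset.mem_product, Finset.mem_range]
  constructor
  · rintro ⟨⟨a, b⟩, ⟨ha, hb⟩, rfl⟩
    simp only
    omega
  · rintro ⟨h1, h2, h3, h4⟩
    refine ⟨⟨(q.1 - p.1).toNat, (q.2 - p.2).toNat⟩, ⟨by omega, by omega⟩, ?_⟩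
    simp only
    have : ((q.1 - p.1).toNat : ℤ) = q.1 - p.1 := by omega
    have : ((q.2 - p.2).toNat : ℤ) = q.2 - p.2 := by omega
    ext <;> simp <;> omega

lemma Zrect_card (m n : ℕ) (p : ℤ × ℤ) : (Zrect m n p).card = m * n := by
  rw [Zrect, Finset.card_image_of_injective, Finset.card_product, Finset.card_range,
    Finset.card_range]
  rintro ⟨a, b⟩ ⟨c, d⟩ h
  simp only [Prod.mk.injEq] at h ⊢
  omega

lemma Zrect_eq_image (m n : ℕ) (p : ℤ × ℤ) :
    Zrect m n p = (Zrect m n (0, 0)).image (· + p) := by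
  ext q
  simp only [Finset.mem_image]
  constructor
  · intro hq
    rw [mem_Zrect] at hq
    refine ⟨q - p, ?_, by simp⟩
    rw [mem_Zrect]
    simp only [Prod.fst_sub, Prod.snd_sub]
    omega
  · rintro ⟨r, hr, rfl⟩
    rw [mem_Zrect] at hr ⊢
    simp only [Prod.fst_add, Prod.snd_add]
    omega
section pc
variable {A : Type*} [Fintype A] {U : Set ((ℤ × ℤ) → A)}

lemma pc_finite (L : Finset (ℤ × ℤ)) :
    ((fun x => fun p : L => x (p : ℤ × ℤ)) '' U).Finite := Set.toFinite _

lemma one_le_pc (hne : U.Nonempty) (L : Finset (ℤ × ℤ)) : 1 ≤ patternCount U L := by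
  rw [patternCount, Nat.one_le_iff_ne_zero]
  have : ((fun x => fun p : L => x (p : ℤ × ℤ)) '' U).Nonempty := hne.image _
  exact fun h => by
    rw [Set.ncard_eq_zero (pc_finite L)] at h
    exact this.ne_empty h

lemma pc_le_pow (L : Finset (ℤ × ℤ)) :
    patternCount U L ≤ Fintype.card A ^ L.card := by
  rw [patternCount]
  calc Set.ncard ((fun x => fun p : L => x (p : ℤ × ℤ)) '' U)
      ≤ Set.ncard (Set.univ : Set (L → A)) := Set.ncard_le_ncard (Set.subset_univ _) Set.finite_univ
    _ = Fintype.card (L → A) := by rw [Set.ncard_univ, Nat.card_eq_fintype_card]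
    _ = Fintype.card A ^ L.card := by rw [Fintype.card_fun, Fintype.card_coe]

lemma pc_mono {L L' : Finset (ℤ × ℤ)} (h : L' ⊆ L) : patternCount U L' ≤ patternCount U L := by
  classical
  set f : (L → A) → (L' → A) := fun g p => g ⟨(p : ℤ × ℤ), h p.2⟩ with hf
  have himg : ((fun x => fun p : L' => x (p : ℤ × ℤ)) '' U)
      = f '' ((fun x => fun p : L => x (p : ℤ × ℤ)) '' U) := by
    rw [← Set.image_comp]; rfl
  rw [patternCount, patternCount, himg]
  exact Set.ncard_image_le (pc_finite L)

lemma pc_union_le (L L' : Finset (ℤ × ℤ)) :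
    patternCount U (L ∪ L') ≤ patternCount U L * patternCount U L' := by
  classical
  set S := ((fun x => fun p : (L ∪ L' : Finset (ℤ × ℤ)) => x (p : ℤ × ℤ)) '' U) with hS
  set f : ((L ∪ L' : Finset (ℤ × ℤ)) → A) → (L → A) × (L' → A) := fun g =>
    (fun p => g ⟨(p : ℤ × ℤ), Finset.mem_union_left _ p.2⟩,
     fun p => g ⟨(p : ℤ × ℤ), Finset.mem_union_right _ p.2⟩) with hfdef
  have hinj : Function.Injective f := by
    intro g g' hgg
    funext p
    rcases Finset.mem_union.mp p.2 with hp | hp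
    · exact congrFun (congrArg Prod.fst hgg) ⟨(p : ℤ × ℤ), hp⟩
    · exact congrFun (congrArg Prod.snd hgg) ⟨(p : ℤ × ℤ), hp⟩
  have hsub : f '' S ⊆ ((fun x => fun p : L => x (p : ℤ × ℤ)) '' U) ×ˢ
      ((fun x => fun p : L' => x (p : ℤ × ℤ)) '' U) := by
    rintro _ ⟨_, ⟨x, hx, rfl⟩, rfl⟩
    exact ⟨⟨x, hx, rfl⟩, ⟨x, hx, rfl⟩⟩
  calc patternCount U (L ∪ L') = S.ncard := rfl
    _ = (f '' S).ncard := (Set.ncard_image_of_injective _ hinj).symm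
    _ ≤ _ := Set.ncard_le_ncard hsub (Set.toFinite _)
    _ ≤ patternCount U L * patternCount U L' := le_of_eq (by
        rw [← Nat.card_coe_set_eq, Nat.card_congr (Equiv.Set.prod _ _), Nat.card_prod,
          Nat.card_coe_set_eq, Nat.card_coe_set_eq]; rfl)

lemma pc_image_le (hinv : ∀ v : ℤ × ℤ, ∀ x ∈ U, (fun p => x (p + v)) ∈ U)
    (L : Finset (ℤ × ℤ)) (v : ℤ × ℤ) :
    patternCount U (L.image (· + v)) ≤ patternCount U L := by
  classical
  set L' := L.image (· + v) with hL'
  have hmem : ∀ p : ℤ × ℤ, p ∈ L → p + v ∈ L' := fun p hp =>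
    Finset.mem_image.mpr ⟨p, hp, rfl⟩
  set f : (L' → A) → (L → A) := fun g p => g ⟨(p : ℤ × ℤ) + v, hmem _ p.2⟩ with hfdef
  have hinj : Function.Injective f := by
    intro g g' hgg
    funext q
    obtain ⟨p, hp, hpq⟩ := Finset.mem_image.mp q.2
    have : q = ⟨p + v, hmem _ hp⟩ := Subtype.ext hpq.symm
    rw [this]
    exact congrFun hgg ⟨p, hp⟩
  have hsub : f '' ((fun x => fun p : L' => x (p : ℤ × ℤ)) '' U)
      ⊆ ((fun x => fun p : L => x (p : ℤ × ℤ)) '' U) := by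
    rintro _ ⟨_, ⟨x, hx, rfl⟩, rfl⟩
    exact ⟨fun p => x (p + v), hinv v x hx, rfl⟩
  calc patternCount U L' = ((fun x => fun p : L' => x (p : ℤ × ℤ)) '' U).ncard := rfl
    _ = (f '' _).ncard := (Set.ncard_image_of_injective _ hinj).symm
    _ ≤ _ := Set.ncard_le_ncard hsub (Set.toFinite _)

lemma pc_image_eq (hinv : ∀ v : ℤ × ℤ, ∀ x ∈ U, (fun p => x (p + v)) ∈ U)
    (L : Finset (ℤ × ℤ)) (v : ℤ × ℤ) :
    patternCount U (L.image (· + v)) = patternCount U L := by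
  refine le_antisymm (pc_image_le hinv L v) ?_
  have : L = (L.image (· + v)).image (· + (-v)) := by
    rw [Finset.image_image]
    ext p; simp
  conv_lhs => rw [this]
  exact pc_image_le hinv _ (-v)

lemma pc_biUnion_le (hne : U.Nonempty) {ι : Type*} (J : Finset ι) (f : ι → Finset (ℤ × ℤ)) :
    patternCount U (J.biUnion f) ≤ ∏ j ∈ J, patternCount U (f j) := by
  classical
  induction J using Finset.induction with
  | empty =>
    simp only [Finset.biUnion_empty, Finset.prod_empty]
    rw [patternCount]
    refine le_trans (Set.ncard_le_ncard (Set.subset_univ _) Set.finite_univ) ?_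
    rw [Set.ncard_univ, Nat.card_eq_fintype_card]
    simp
  | insert a s hj ih =>
    rw [Finset.biUnion_insert, Finset.prod_insert hj]
    exact le_trans (pc_union_le _ _) (Nat.mul_le_mul_left _ ih)

end pc
/-- floor-division bracketing -/
lemma ediv_bracket {k : ℕ} (hk : 1 ≤ k) (x : ℤ) :
    (k : ℤ) * (x / k) ≤ x ∧ x < (k : ℤ) * (x / k) + k := by
  have hk' : (0:ℤ) < k := by exact_mod_cast hk
  have h1 := Int.emod_add_mul_ediv x k
  have h2 := Int.emod_nonneg x (by positivity : (k:ℤ) ≠ 0)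
  have h3 := Int.emod_lt_of_pos x hk'
  constructor <;> linarith

lemma ediv_unique {k : ℕ} (hk : 1 ≤ k) {x a : ℤ} (h1 : (k:ℤ) * a ≤ x) (h2 : x < (k:ℤ) * a + k) :
    a = x / k := by
  have hk' : (0:ℤ) < k := by exact_mod_cast hk
  have hb := ediv_bracket hk x
  by_contra hne
  rcases lt_or_gt_of_ne hne with h | h
  · have : (k:ℤ) * (a + 1) ≤ (k:ℤ) * (x / k) := by
      apply mul_le_mul_of_nonneg_left _ hk'.le
      omega
    nlinarith
  · have : (k:ℤ) * ((x / k) + 1) ≤ (k:ℤ) * a := by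
      apply mul_le_mul_of_nonneg_left _ hk'.le
      omega
    nlinarith

/-- the aligned cell containing `p` -/
noncomputable def cellCorner (k l : ℕ) (p : ℤ × ℤ) : ℤ × ℤ :=
  ((k : ℤ) * (p.1 / k), (l : ℤ) * (p.2 / l))

lemma mem_cell {k l : ℕ} (hk : 1 ≤ k) (hl : 1 ≤ l) (p : ℤ × ℤ) :
    p ∈ Zrect k l (cellCorner k l p) := by
  rw [mem_Zrect, cellCorner]
  have h1 := ediv_bracket hk p.1
  have h2 := ediv_bracket hl p.2
  exact ⟨h1.1, h1.2, h2.1, h2.2⟩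

lemma cell_eq_of_mem {k l : ℕ} (hk : 1 ≤ k) (hl : 1 ≤ l) {p : ℤ × ℤ} {a b : ℤ}
    (h : p ∈ Zrect k l ((k : ℤ) * a, (l : ℤ) * b)) :
    cellCorner k l p = ((k : ℤ) * a, (l : ℤ) * b) := by
  rw [mem_Zrect] at h
  obtain ⟨h1, h2, h3, h4⟩ := h
  rw [cellCorner, Prod.mk.injEq]
  constructor
  · rw [← ediv_unique hk h1 h2]
  · rw [← ediv_unique hl h3 h4]

lemma mem_gridPart_iff {k l : ℕ} (hk : 1 ≤ k) (hl : 1 ≤ l) {L : Finset (ℤ × ℤ)} {p : ℤ × ℤ} :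
    p ∈ gridPart k l L ↔ p ∈ L ∧ Zrect k l (cellCorner k l p) ⊆ L := by
  rw [gridPart, Finset.mem_filter]
  constructor
  · rintro ⟨hp, a, b, hmem, hsub⟩
    rw [cell_eq_of_mem hk hl hmem]
    exact ⟨hp, hsub⟩
  · rintro ⟨hp, hsub⟩
    exact ⟨hp, p.1 / k, p.2 / l, mem_cell hk hl p, hsub⟩

/-- two points in a common aligned cell have the same cell -/
lemma cellCorner_eq_of_mem_cell {k l : ℕ} (hk : 1 ≤ k) (hl : 1 ≤ l) {p q : ℤ × ℤ}
    (h : q ∈ Zrect k l (cellCorner k l p)) : cellCorner k l q = cellCorner k l p := by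
  have : cellCorner k l p = ((k:ℤ) * (p.1 / k), (l:ℤ) * (p.2 / l)) := rfl
  rw [this] at h
  rw [cell_eq_of_mem hk hl h, this]

end Aux

section Decomp
variable {A : Type*} [Fintype A] {U : Set ((ℤ × ℤ) → A)}

lemma cells_disjoint {k l : ℕ} (hk : 1 ≤ k) (hl : 1 ≤ l) {a b a' b' : ℤ}
    (h : (a, b) ≠ (a', b')) :
    Disjoint (Zrect k l ((k : ℤ) * a, (l : ℤ) * b)) (Zrect k l ((k : ℤ) * a', (l : ℤ) * b')) := by
  rw [Finset.disjoint_left]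
  intro q hq hq'
  have e1 := cell_eq_of_mem hk hl hq
  have e2 := cell_eq_of_mem hk hl hq'
  rw [e1] at e2
  apply h
  have hk' : (k:ℤ) ≠ 0 := by positivity
  have hl' : (l:ℤ) ≠ 0 := by positivity
  rw [Prod.mk.injEq] at e2 ⊢
  exact ⟨mul_left_cancel₀ hk' e2.1, mul_left_cancel₀ hl' e2.2⟩

/-- index set of full cells (meeting L) -/
noncomputable def cellIdx (k l : ℕ) (L : Finset (ℤ × ℤ)) : Finset (ℤ × ℤ) :=
  (L.image fun p => (p.1 / (k:ℤ), p.2 / (l:ℤ))).filter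
    (fun ab => Zrect k l ((k:ℤ) * ab.1, (l:ℤ) * ab.2) ⊆ L)

lemma gridPart_eq_biUnion {k l : ℕ} (hk : 1 ≤ k) (hl : 1 ≤ l) (L : Finset (ℤ × ℤ)) :
    gridPart k l L = (cellIdx k l L).biUnion
      (fun ab => Zrect k l ((k:ℤ) * ab.1, (l:ℤ) * ab.2)) := by
  ext p
  rw [Finset.mem_biUnion]
  constructor
  · intro hp
    obtain ⟨hpL, hsub⟩ := (mem_gridPart_iff hk hl).mp hp
    refine ⟨(p.1 / (k:ℤ), p.2 / (l:ℤ)), ?_, mem_cell hk hl p⟩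
    rw [cellIdx, Finset.mem_filter]
    exact ⟨Finset.mem_image.mpr ⟨p, hpL, rfl⟩, hsub⟩
  · rintro ⟨⟨a, b⟩, hab, hmem⟩
    rw [cellIdx, Finset.mem_filter] at hab
    rw [gridPart, Finset.mem_filter]
    exact ⟨hab.2 hmem, a, b, hmem, hab.2⟩

lemma gridPart_card {k l : ℕ} (hk : 1 ≤ k) (hl : 1 ≤ l) (L : Finset (ℤ × ℤ)) :
    (gridPart k l L).card = (cellIdx k l L).card * (k * l) := by
  rw [gridPart_eq_biUnion hk hl, Finset.card_biUnion]
  · simp [Zrect_card]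
  · intro x _ y _ hxy
    exact cells_disjoint hk hl (by simpa using hxy)

lemma gridPart_subset (k l : ℕ) (L : Finset (ℤ × ℤ)) : gridPart k l L ⊆ L :=
  Finset.filter_subset _ _

lemma pc_le_decomp (hne : U.Nonempty)
    (hinv : ∀ v : ℤ × ℤ, ∀ x ∈ U, (fun p => x (p + v)) ∈ U)
    {k l : ℕ} (hk : 1 ≤ k) (hl : 1 ≤ l) (L : Finset (ℤ × ℤ)) :
    patternCount U L ≤ patternCount U (Zrect k l (0, 0)) ^ (cellIdx k l L).card *
      Fintype.card A ^ betaKL k l L := by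
  have hL : L = gridPart k l L ∪ (L \ gridPart k l L) :=
    (Finset.union_sdiff_of_subset (gridPart_subset k l L)).symm
  calc patternCount U L = patternCount U (gridPart k l L ∪ (L \ gridPart k l L)) := by rw [← hL]
    _ ≤ patternCount U (gridPart k l L) * patternCount U (L \ gridPart k l L) := pc_union_le _ _
    _ ≤ patternCount U (Zrect k l (0, 0)) ^ (cellIdx k l L).card *
        Fintype.card A ^ betaKL k l L := by
      apply Nat.mul_le_mul
      · rw [gridPart_eq_biUnion hk hl]
        refine le_trans (pc_biUnion_le hne _ _) ?_
        rw [← Finset.prod_const]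
        apply Finset.prod_le_prod'
        intro ab _
        calc patternCount U (Zrect k l ((k:ℤ) * ab.1, (l:ℤ) * ab.2))
            = patternCount U ((Zrect k l (0,0)).image (· + ((k:ℤ) * ab.1, (l:ℤ) * ab.2))) := by
              rw [← Zrect_eq_image]
          _ ≤ patternCount U (Zrect k l (0, 0)) := pc_image_le hinv _ _
      · rw [betaKL]
        exact pc_le_pow _

lemma log_pc_le (hne : U.Nonempty)
    (hinv : ∀ v : ℤ × ℤ, ∀ x ∈ U, (fun p => x (p + v)) ∈ U)
    {k l : ℕ} (hk : 1 ≤ k) (hl : 1 ≤ l) (L : Finset (ℤ × ℤ)) :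
    Real.log (patternCount U L) ≤
      ((L.card : ℝ) / ((k : ℝ) * l)) * Real.log (patternCount U (Zrect k l (0, 0))) +
      (betaKL k l L : ℝ) * Real.log (Fintype.card A) := by
  obtain ⟨x, hx⟩ := hne
  have hA : 1 ≤ Fintype.card A := Fintype.card_pos_iff.mpr ⟨x 0⟩
  have hkl : (0:ℝ) < (k : ℝ) * l := by positivity
  have h1 : (1 : ℕ) ≤ patternCount U (Zrect k l (0,0)) := one_le_pc ⟨x, hx⟩ _
  have hlog1 : 0 ≤ Real.log (patternCount U (Zrect k l (0,0))) :=
    Real.log_nonneg (by exact_mod_cast h1)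
  have hlogA : 0 ≤ Real.log (Fintype.card A) := Real.log_nonneg (by exact_mod_cast hA)
  have hc : ((cellIdx k l L).card : ℝ) ≤ (L.card : ℝ) / ((k : ℝ) * l) := by
    rw [le_div_iff₀ hkl]
    have := Finset.card_le_card (gridPart_subset k l L)
    rw [gridPart_card hk hl] at this
    exact_mod_cast this
  calc Real.log (patternCount U L)
      ≤ Real.log ((patternCount U (Zrect k l (0, 0)) ^ (cellIdx k l L).card *
          Fintype.card A ^ betaKL k l L : ℕ) : ℝ) := by
        apply Real.log_le_log
        · exact_mod_cast one_le_pc ⟨x, hx⟩ L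
        · exact_mod_cast pc_le_decomp ⟨x, hx⟩ hinv hk hl L
    _ = ((cellIdx k l L).card : ℝ) * Real.log (patternCount U (Zrect k l (0,0))) +
        (betaKL k l L : ℝ) * Real.log (Fintype.card A) := by
        push_cast
        have hp1 : ((patternCount U (Zrect k l (0,0)) : ℝ)) ^ (cellIdx k l L).card ≠ 0 := by
          have : (0:ℝ) < (patternCount U (Zrect k l (0,0)) : ℝ) := by exact_mod_cast h1
          positivity
        have hp2 : ((Fintype.card A : ℝ)) ^ betaKL k l L ≠ 0 := by
          have : (0:ℝ) < (Fintype.card A : ℝ) := by exact_mod_cast hA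
          positivity
        rw [Real.log_mul hp1 hp2, Real.log_pow, Real.log_pow]
    _ ≤ _ := by
        apply add_le_add_left
        exact mul_le_mul_of_nonneg_right hc hlog1

end Decomp

section OneDim

lemma exists_frontier_up (P : ℤ → Prop) (x : ℤ) (hx : P x) {s : ℕ} (hs : ¬ P (x + s + 1)) :
    ∃ t : ℤ, x ≤ t ∧ t ≤ x + s ∧ ¬ P (t + 1) ∧ ∀ y, x ≤ y → y ≤ t → P y := by
  classical
  have hex : ∃ n : ℕ, ¬ P (x + n + 1) := ⟨s, hs⟩
  set s₀ := Nat.find hex with hs₀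
  refine ⟨x + s₀, by omega, ?_, ?_, ?_⟩
  · have : s₀ ≤ s := Nat.find_le hs
    omega
  · have := Nat.find_spec hex
    convert this using 2
  · intro y hy1 hy2
    rcases eq_or_lt_of_le hy1 with rfl | hlt
    · exact hx
    · have hj : (y - x - 1).toNat < s₀ := by omega
      have := Nat.find_min hex hj
      rw [not_not] at this
      convert this using 2
      omega

lemma exists_frontier_down (P : ℤ → Prop) (x : ℤ) (hx : P x) {s : ℕ} (hs : ¬ P (x - s - 1)) :
    ∃ t : ℤ, x - s ≤ t ∧ t ≤ x ∧ ¬ P (t - 1) ∧ ∀ y, t ≤ y → y ≤ x → P y := by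
  classical
  set Q : ℤ → Prop := fun y => P (2 * x - y) with hQ
  have hx' : Q x := by
    show P (2 * x - x); rw [show 2 * x - x = x by ring]; exact hx
  have hs' : ¬ Q (x + s + 1) := by
    show ¬ P (2 * x - (x + s + 1))
    rw [show 2 * x - (x + s + 1) = x - s - 1 by ring]; exact hs
  obtain ⟨t', h1, h2, h3, h4⟩ := exists_frontier_up Q x hx' hs'
  refine ⟨2 * x - t', by omega, by omega, ?_, ?_⟩
  · have : ¬ P (2 * x - (t' + 1)) := h3
    rw [show 2 * x - (t' + 1) = (2 * x - t') - 1 by ring] at this; exact this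
  · intro y hy1 hy2
    have : P (2 * x - (2 * x - y)) := h4 (2 * x - y) (by omega) (by omega)
    rw [show 2 * x - (2 * x - y) = y by ring] at this; exact this

lemma int_transition (P : ℤ → Prop) {x x' : ℤ} (h : P x) (h' : ¬ P x') :
    ∃ t, P t ∧ (¬ P (t + 1) ∨ ¬ P (t - 1)) ∧ min x x' ≤ t ∧ t ≤ max x x' := by
  rcases lt_trichotomy x x' with hlt | rfl | hlt
  · have hs : ¬ P (x + (x' - x - 1).toNat + 1) := by
      have : x + ((x' - x - 1).toNat : ℤ) + 1 = x' := by omega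
      rw [this]; exact h'
    obtain ⟨t, h1, h2, h3, h4⟩ := exists_frontier_up P x h hs
    exact ⟨t, h4 t h1 le_rfl, Or.inl h3, by omega, by omega⟩
  · exact absurd h h'
  · have hs : ¬ P (x - (x - x' - 1).toNat - 1) := by
      have : x - ((x - x' - 1).toNat : ℤ) - 1 = x' := by omega
      rw [this]; exact h'
    obtain ⟨t, h1, h2, h3, h4⟩ := exists_frontier_down P x h hs
    exact ⟨t, h4 t le_rfl h2, Or.inr h3, by omega, by omega⟩

end OneDim

section BetaBound

/-- points whose left neighbour is missing -/
noncomputable def coBdryH (L : Finset (ℤ × ℤ)) : Finset (ℤ × ℤ) :=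
  L.filter (fun z => ((z.1 - 1, z.2) : ℤ × ℤ) ∉ L)

/-- points whose lower neighbour is missing -/
noncomputable def coBdryV (L : Finset (ℤ × ℤ)) : Finset (ℤ × ℤ) :=
  L.filter (fun z => ((z.1, z.2 - 1) : ℤ × ℤ) ∉ L)

lemma mem_latBoundary_of {L : Finset (ℤ × ℤ)} {w : ℤ × ℤ} (hw : w ∈ L)
    (h : ((w.1 + 1, w.2) : ℤ × ℤ) ∉ L ∨ ((w.1, w.2 + 1) : ℤ × ℤ) ∉ L) : w ∈ latBoundary L := by
  rw [latBoundary, Finset.mem_sdiff]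
  refine ⟨hw, fun hcon => ?_⟩
  rw [latInterior, Finset.mem_filter] at hcon
  rcases h with h | h
  · exact h hcon.2.1
  · exact h hcon.2.2.1

lemma coBdryH_card_le (L : Finset (ℤ × ℤ)) : (coBdryH L).card ≤ (latBoundary L).card := by
  classical
  have key : ∀ z : ℤ × ℤ, ∃ w : ℤ × ℤ, z ∈ coBdryH L →
      w ∈ latBoundary L ∧ w.2 = z.2 ∧ z.1 ≤ w.1 ∧
        ∀ y, z.1 ≤ y → y ≤ w.1 → ((y, z.2) : ℤ × ℤ) ∈ L := by
    intro z
    by_cases hz : z ∈ coBdryH L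
    · have hzL : z ∈ L := (Finset.mem_filter.mp hz).1
      have hLne : (L.image Prod.fst).Nonempty := ⟨z.1, Finset.mem_image_of_mem _ hzL⟩
      set M := (L.image Prod.fst).max' hLne with hM
      have hbound : ∀ w ∈ L, w.1 ≤ M := fun w hw =>
        Finset.le_max' _ _ (Finset.mem_image_of_mem _ hw)
      have hzM : z.1 ≤ M := hbound z hzL
      have hs : ¬ (((z.1 + ((M - z.1).toNat : ℤ) + 1, z.2) : ℤ × ℤ) ∈ L) := by
        intro hcon
        have := hbound _ hcon
        simp only at this
        omega
      have hx : ((z.1, z.2) : ℤ × ℤ) ∈ L := by rw [Prod.mk.eta]; exact hzL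
      obtain ⟨t, h1, h2, h3, h4⟩ :=
        exists_frontier_up (fun t => ((t, z.2) : ℤ × ℤ) ∈ L) z.1 hx hs
      refine ⟨(t, z.2), fun _ => ⟨?_, rfl, h1, fun y hy1 hy2 => h4 y hy1 hy2⟩⟩
      exact mem_latBoundary_of (h4 t h1 le_rfl) (Or.inl h3)
    · exact ⟨z, fun h => absurd h hz⟩
  choose f hf using key
  apply Finset.card_le_card_of_injOn f (fun z hz => (hf z hz).1)
  intro z hz z' hz' heq
  obtain ⟨_, he2, he3, he4⟩ := hf z hz
  obtain ⟨_, he2', he3', he4'⟩ := hf z' hz'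
  have hzz : z.2 = z'.2 := by rw [← he2, ← he2', heq]
  rcases lt_trichotomy z.1 z'.1 with hlt | he | hlt
  · exfalso
    have hmem : ((z'.1 - 1, z.2) : ℤ × ℤ) ∈ L := by
      apply he4 _ (by omega)
      have : z'.1 ≤ (f z').1 := he3'
      rw [heq]; omega
    have := (Finset.mem_filter.mp hz').2
    rw [← hzz] at this
    exact this hmem
  · exact Prod.ext he hzz
  · exfalso
    have hmem : ((z.1 - 1, z'.2) : ℤ × ℤ) ∈ L := by
      apply he4' _ (by omega)
      have : z.1 ≤ (f z).1 := he3
      rw [← heq]; omega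
    have := (Finset.mem_filter.mp hz).2
    rw [hzz] at this
    exact this hmem

lemma coBdryV_card_le (L : Finset (ℤ × ℤ)) : (coBdryV L).card ≤ (latBoundary L).card := by
  classical
  have key : ∀ z : ℤ × ℤ, ∃ w : ℤ × ℤ, z ∈ coBdryV L →
      w ∈ latBoundary L ∧ w.1 = z.1 ∧ z.2 ≤ w.2 ∧
        ∀ y, z.2 ≤ y → y ≤ w.2 → ((z.1, y) : ℤ × ℤ) ∈ L := by
    intro z
    by_cases hz : z ∈ coBdryV L
    · have hzL : z ∈ L := (Finset.mem_filter.mp hz).1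
      have hLne : (L.image Prod.snd).Nonempty := ⟨z.2, Finset.mem_image_of_mem _ hzL⟩
      set M := (L.image Prod.snd).max' hLne with hM
      have hbound : ∀ w ∈ L, w.2 ≤ M := fun w hw =>
        Finset.le_max' _ _ (Finset.mem_image_of_mem _ hw)
      have hzM : z.2 ≤ M := hbound z hzL
      have hs : ¬ (((z.1, z.2 + ((M - z.2).toNat : ℤ) + 1) : ℤ × ℤ) ∈ L) := by
        intro hcon
        have := hbound _ hcon
        simp only at this
        omega
      have hx : ((z.1, z.2) : ℤ × ℤ) ∈ L := by rw [Prod.mk.eta]; exact hzL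
      obtain ⟨t, h1, h2, h3, h4⟩ :=
        exists_frontier_up (fun t => ((z.1, t) : ℤ × ℤ) ∈ L) z.2 hx hs
      refine ⟨(z.1, t), fun _ => ⟨?_, rfl, h1, fun y hy1 hy2 => h4 y hy1 hy2⟩⟩
      exact mem_latBoundary_of (h4 t h1 le_rfl) (Or.inr h3)
    · exact ⟨z, fun h => absurd h hz⟩
  choose f hf using key
  apply Finset.card_le_card_of_injOn f (fun z hz => (hf z hz).1)
  intro z hz z' hz' heq
  obtain ⟨_, he2, he3, he4⟩ := hf z hz
  obtain ⟨_, he2', he3', he4'⟩ := hf z' hz'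
  have hzz : z.1 = z'.1 := by rw [← he2, ← he2', heq]
  rcases lt_trichotomy z.2 z'.2 with hlt | he | hlt
  · exfalso
    have hmem : ((z.1, z'.2 - 1) : ℤ × ℤ) ∈ L := by
      apply he4 _ (by omega)
      have : z'.2 ≤ (f z').2 := he3'
      rw [heq]; omega
    have := (Finset.mem_filter.mp hz').2
    rw [← hzz] at this
    exact this hmem
  · exact Prod.ext hzz he
  · exfalso
    have hmem : ((z'.1, z.2 - 1) : ℤ × ℤ) ∈ L := by
      apply he4' _ (by omega)
      have : z.2 ≤ (f z).2 := he3
      rw [← heq]; omega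
    have := (Finset.mem_filter.mp hz).2
    rw [hzz] at this
    exact this hmem

/-- the set of boundary-like points -/
noncomputable def badSet (L : Finset (ℤ × ℤ)) : Finset (ℤ × ℤ) :=
  latBoundary L ∪ coBdryH L ∪ coBdryV L

lemma badSet_card_le (L : Finset (ℤ × ℤ)) : (badSet L).card ≤ 3 * (latBoundary L).card := by
  calc (badSet L).card ≤ (latBoundary L ∪ coBdryH L).card + (coBdryV L).card :=
        Finset.card_union_le _ _
    _ ≤ (latBoundary L).card + (coBdryH L).card + (coBdryV L).card := by
        have := Finset.card_union_le (latBoundary L) (coBdryH L)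
        omega
    _ ≤ 3 * (latBoundary L).card := by
        have h1 := coBdryH_card_le L
        have h2 := coBdryV_card_le L
        omega

lemma bad_point_cell {k l : ℕ} (hk : 1 ≤ k) (hl : 1 ≤ l) {L : Finset (ℤ × ℤ)} {p : ℤ × ℤ}
    (hp : p ∈ L \ gridPart k l L) :
    ∃ u ∈ badSet L, u ∈ Zrect k l (cellCorner k l p) := by
  rw [Finset.mem_sdiff] at hp
  obtain ⟨hpL, hpng⟩ := hp
  have hnsub : ¬ Zrect k l (cellCorner k l p) ⊆ L := fun hcon =>
    hpng ((mem_gridPart_iff hk hl).mpr ⟨hpL, hcon⟩)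
  obtain ⟨q, hqC, hqL⟩ := Finset.not_subset.mp hnsub
  have hpC := mem_cell hk hl p
  rw [mem_Zrect] at hpC hqC
  by_cases hr : ((q.1, p.2) : ℤ × ℤ) ∈ L
  · -- vertical transition from (q.1, p.2) to q along column q.1
    have hq' : ¬ ((fun t => ((q.1, t) : ℤ × ℤ) ∈ L) q.2) := by
      simpa using hqL
    obtain ⟨t, h1, h2, h3, h4⟩ := int_transition (fun t => ((q.1, t) : ℤ × ℤ) ∈ L) hr hq'
    refine ⟨(q.1, t), ?_, ?_⟩
    · rcases h2 with h2 | h2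
      · exact Finset.mem_union_left _ (Finset.mem_union_left _
          (mem_latBoundary_of h1 (Or.inr h2)))
      · exact Finset.mem_union_right _ (Finset.mem_filter.mpr ⟨h1, h2⟩)
    · rw [mem_Zrect]
      simp only [min_le_iff, le_max_iff] at h3 h4
      constructor
      · exact hqC.1
      refine ⟨hqC.2.1, ?_, ?_⟩ <;> omega
  · -- horizontal transition from p to (q.1, p.2) along row p.2
    have hp' : (fun t => ((t, p.2) : ℤ × ℤ) ∈ L) p.1 := by
      simpa using hpL
    obtain ⟨t, h1, h2, h3, h4⟩ := int_transition (fun t => ((t, p.2) : ℤ × ℤ) ∈ L) hp' hr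
    refine ⟨(t, p.2), ?_, ?_⟩
    · rcases h2 with h2 | h2
      · exact Finset.mem_union_left _ (Finset.mem_union_left _
          (mem_latBoundary_of h1 (Or.inl h2)))
      · exact Finset.mem_union_left _ (Finset.mem_union_right _
          (Finset.mem_filter.mpr ⟨h1, h2⟩))
    · rw [mem_Zrect]
      simp only [min_le_iff, le_max_iff] at h3 h4
      refine ⟨?_, ?_, hpC.2.2.1, hpC.2.2.2⟩ <;> omega

lemma betaKL_le {k l : ℕ} (hk : 1 ≤ k) (hl : 1 ≤ l) (L : Finset (ℤ × ℤ)) :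
    betaKL k l L ≤ 3 * (k * l) * (latBoundary L).card := by
  classical
  rw [betaKL]
  have hsub : L \ gridPart k l L ⊆
      (badSet L).biUnion (fun w => Zrect k l (cellCorner k l w)) := by
    intro p hp
    obtain ⟨u, huB, huC⟩ := bad_point_cell hk hl hp
    rw [Finset.mem_biUnion]
    refine ⟨u, huB, ?_⟩
    rw [cellCorner_eq_of_mem_cell hk hl huC]
    exact mem_cell hk hl p
  calc (L \ gridPart k l L).card ≤ _ := Finset.card_le_card hsub
    _ ≤ ∑ w ∈ badSet L, (Zrect k l (cellCorner k l w)).card := Finset.card_biUnion_le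
    _ = (badSet L).card * (k * l) := by simp [Zrect_card]
    _ ≤ 3 * (latBoundary L).card * (k * l) := by
        have := badSet_card_le L
        exact Nat.mul_le_mul_right _ this
    _ = 3 * (k * l) * (latBoundary L).card := by ring

end BetaBound

section Tess
variable {A : Type*} [Fintype A] {U : Set ((ℤ × ℤ) → A)}

lemma rect_bddBelow : BddBelow (Set.range (fun mn : ℕ × ℕ =>
    (1 / (((mn.1 + 1) * (mn.2 + 1) : ℕ) : ℝ)) *
      Real.log (patternCount U (Zrect (mn.1 + 1) (mn.2 + 1) (0, 0))))) := by
  refine ⟨0, ?_⟩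
  rintro x ⟨mn, rfl⟩
  have : (0:ℝ) ≤ Real.log (patternCount U (Zrect (mn.1 + 1) (mn.2 + 1) (0, 0))) := by
    rcases Nat.eq_zero_or_pos (patternCount U (Zrect (mn.1 + 1) (mn.2 + 1) (0, 0))) with h | h
    · rw [h]; simp
    · exact Real.log_nonneg (by exact_mod_cast h)
  positivity

lemma rectEntropy_nonneg : 0 ≤ rectEntropy U := by
  rw [rectEntropy]
  apply le_ciInf
  intro mn
  have : (0:ℝ) ≤ Real.log (patternCount U (Zrect (mn.1 + 1) (mn.2 + 1) (0, 0))) := by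
    rcases Nat.eq_zero_or_pos (patternCount U (Zrect (mn.1 + 1) (mn.2 + 1) (0, 0))) with h | h
    · rw [h]; simp
    · exact Real.log_nonneg (by exact_mod_cast h)
  positivity

lemma rectEntropy_le (m n : ℕ) : rectEntropy U ≤
    (1 / (((m + 1) * (n + 1) : ℕ) : ℝ)) *
      Real.log (patternCount U (Zrect (m + 1) (n + 1) (0, 0))) :=
  ciInf_le rect_bddBelow (m, n)

lemma log_pc_nonneg (hne : U.Nonempty) (L : Finset (ℤ × ℤ)) :
    0 ≤ Real.log (patternCount U L) :=
  Real.log_nonneg (by exact_mod_cast one_le_pc hne L)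

lemma rectEntropy_le' {U : Set ((ℤ × ℤ) → A)} {m n : ℕ} (hm : 1 ≤ m) (hn : 1 ≤ n) :
    rectEntropy U ≤ (1 / ((m : ℝ) * (n : ℝ))) *
      Real.log (patternCount U (Zrect m n (0, 0))) := by
  obtain ⟨m', rfl⟩ : ∃ m', m = m' + 1 := ⟨m - 1, by omega⟩
  obtain ⟨n', rfl⟩ : ∃ n', n = n' + 1 := ⟨n - 1, by omega⟩
  have h := rectEntropy_le (U := U) m' n'
  convert h using 3
  push_cast; ring

set_option maxHeartbeats 1000000 in
lemma tess_le (hne : U.Nonempty)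
    (hinv : ∀ v : ℤ × ℤ, ∀ x ∈ U, (fun p => x (p + v)) ∈ U)
    (T : Finset (ℤ × ℤ)) (hT : IsTessellation T) :
    (T.card : ℝ) * rectEntropy U ≤ Real.log (patternCount U T) := by
  classical
  obtain ⟨v, hdisj, hcover⟩ := hT
  -- T is nonempty
  have hTne : T.Nonempty := by
    obtain ⟨i, hi⟩ := hcover (0, 0)
    obtain ⟨t, ht, _⟩ := Finset.mem_image.mp hi
    exact ⟨t, ht⟩
  -- v is injective
  have hvinj : Function.Injective v := by
    intro i j hij
    by_contra hne'
    have hd := hdisj i j hne'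
    rw [hij, Finset.disjoint_self_iff_empty, Finset.image_eq_empty] at hd
    exact hTne.ne_empty hd
  -- a bound on coordinates of T
  obtain ⟨D, hD⟩ : ∃ D : ℕ, ∀ t ∈ T, t.1.natAbs ≤ D ∧ t.2.natAbs ≤ D := by
    refine ⟨(T.image (fun t => max t.1.natAbs t.2.natAbs)).max' (hTne.image _), fun t ht => ?_⟩
    have h : max t.1.natAbs t.2.natAbs ≤ (T.image (fun t => max t.1.natAbs t.2.natAbs)).max'
        (hTne.image _) :=
      Finset.le_max' _ _ (Finset.mem_image_of_mem (fun t => max t.1.natAbs t.2.natAbs) ht)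
    omega
  have hlogT : 0 ≤ Real.log (patternCount U T) := log_pc_nonneg hne T
  -- key inequality for each m
  have key : ∀ m' : ℕ, (T.card : ℝ) * rectEntropy U ≤
      (((m' + 1 + 4 * D : ℕ) : ℝ) ^ 2 / ((m' + 1 : ℕ) : ℝ) ^ 2) *
        Real.log (patternCount U T) := by
    intro m'
    set m : ℕ := m' + 1 with hm
    set R : Finset (ℤ × ℤ) := Zrect m m (0, 0) with hR
    -- index set of tiles meeting R
    set Iset : Set ℕ := {i | ∃ p, p ∈ T.image (· + v i) ∧ p ∈ R} with hIset
    have hIfin : Iset.Finite := by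
      have hsub : Iset ⊆ v ⁻¹' ↑(R.biUnion (fun p => T.image (fun t => p - t))) := by
        rintro i ⟨p, hp1, hp2⟩
        obtain ⟨t, ht, hpt⟩ := Finset.mem_image.mp hp1
        simp only [Set.mem_preimage, Finset.coe_biUnion, Set.mem_iUnion, Finset.mem_coe]
        exact ⟨p, hp2, Finset.mem_image.mpr ⟨t, ht, by rw [← hpt]; ring⟩⟩
      exact Set.Finite.subset (Set.Finite.preimage (hvinj.injOn) (Finset.finite_toSet _)) hsub
    set IF : Finset ℕ := hIfin.toFinset with hIF
    have hmemIF : ∀ i, i ∈ IF ↔ i ∈ Iset := fun i => Set.Finite.mem_toFinset hIfin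
    -- covering
    have hcov : R = IF.biUnion (fun i => (T.image (· + v i)) ∩ R) := by
      apply Finset.Subset.antisymm
      · intro p hp
        obtain ⟨i, hi⟩ := hcover p
        exact Finset.mem_biUnion.mpr ⟨i, (hmemIF i).mpr ⟨p, hi, hp⟩,
          Finset.mem_inter.mpr ⟨hi, hp⟩⟩
      · intro p hp
        obtain ⟨i, _, hpi⟩ := Finset.mem_biUnion.mp hp
        exact (Finset.mem_inter.mp hpi).2
    -- pattern count bound
    have hnat : patternCount U R ≤ patternCount U T ^ IF.card := by
      rw [hcov]
      refine le_trans (pc_biUnion_le hne _ _) ?_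
      rw [← Finset.prod_const]
      apply Finset.prod_le_prod'
      intro i _
      refine le_trans (pc_mono Finset.inter_subset_left) ?_
      exact pc_image_le hinv T (v i)
    -- counting bound
    have hcount : IF.card * T.card ≤ (m + 4 * D) * (m + 4 * D) := by
      have hdisj' : ∀ i ∈ IF, ∀ j ∈ IF, i ≠ j →
          Disjoint (T.image (· + v i)) (T.image (· + v j)) := fun i _ j _ hij => hdisj i j hij
      have hcards : (IF.biUnion (fun i => T.image (· + v i))).card = IF.card * T.card := by
        rw [Finset.card_biUnion hdisj']
        have heach : ∀ i, (T.image (· + v i)).card = T.card := fun i =>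
          Finset.card_image_of_injective _ (add_left_injective _)
        rw [Finset.sum_congr rfl (fun i _ => heach i), Finset.sum_const, smul_eq_mul]
      have hsubbig : IF.biUnion (fun i => T.image (· + v i)) ⊆
          Zrect (m + 4 * D) (m + 4 * D) (-(2 * D), -(2 * D)) := by
        intro p hp
        obtain ⟨i, hiIF, hpi⟩ := Finset.mem_biUnion.mp hp
        obtain ⟨q, hq1, hq2⟩ := (hmemIF i).mp hiIF
        obtain ⟨t, ht, hpt⟩ := Finset.mem_image.mp hpi
        obtain ⟨t', ht', hqt⟩ := Finset.mem_image.mp hq1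
        rw [mem_Zrect] at hq2 ⊢
        have hDt := hD t ht
        have hDt' := hD t' ht'
        have hpq : p = q + (t - t') := by rw [← hpt, ← hqt]; ring
        simp only [hpq, Prod.fst_add, Prod.snd_add, Prod.fst_sub, Prod.snd_sub]
        simp only [hR, mem_Zrect] at hq2
        push_cast
        omega
      have := Finset.card_le_card hsubbig
      rw [hcards, Zrect_card] at this
      exact this
    -- put everything together
    have hm0 : (0:ℝ) < ((m:ℕ) : ℝ) := by positivity
    have hmul : ((m * m : ℕ) : ℝ) = ((m:ℕ):ℝ) * ((m:ℕ):ℝ) := by push_cast; ring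
    have step1 : rectEntropy U ≤ (1 / (((m:ℕ):ℝ) * ((m:ℕ):ℝ))) *
        Real.log (patternCount U R) := by
      rw [hR]
      exact rectEntropy_le' (by omega) (by omega)
    have step2 : Real.log (patternCount U R) ≤ (IF.card : ℝ) * Real.log (patternCount U T) := by
      calc Real.log (patternCount U R)
          ≤ Real.log ((patternCount U T ^ IF.card : ℕ) : ℝ) := by
            apply Real.log_le_log
            · exact_mod_cast one_le_pc hne R
            · exact_mod_cast hnat
        _ = (IF.card : ℝ) * Real.log (patternCount U T) := by
            push_cast
            rw [Real.log_pow]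
    have step3 : (IF.card : ℝ) * (T.card : ℝ) ≤ ((m + 4 * D : ℕ) : ℝ) ^ 2 := by
      have : ((IF.card * T.card : ℕ) : ℝ) ≤ (((m + 4 * D) * (m + 4 * D) : ℕ) : ℝ) := by
        exact_mod_cast hcount
      push_cast at this ⊢
      nlinarith
    calc (T.card : ℝ) * rectEntropy U
        ≤ (T.card : ℝ) * ((1 / (((m:ℕ):ℝ) * ((m:ℕ):ℝ))) * Real.log (patternCount U R)) :=
          mul_le_mul_of_nonneg_left step1 (Nat.cast_nonneg _)
      _ ≤ (T.card : ℝ) * ((1 / (((m:ℕ):ℝ) * ((m:ℕ):ℝ))) *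
            ((IF.card : ℝ) * Real.log (patternCount U T))) := by
          apply mul_le_mul_of_nonneg_left _ (Nat.cast_nonneg _)
          apply mul_le_mul_of_nonneg_left step2
            (one_div_nonneg.mpr (mul_nonneg (Nat.cast_nonneg _) (Nat.cast_nonneg _)))
      _ = ((IF.card : ℝ) * (T.card : ℝ)) * Real.log (patternCount U T) *
            (1 / (((m:ℕ):ℝ) * ((m:ℕ):ℝ))) := by ring
      _ ≤ ((m + 4 * D : ℕ) : ℝ) ^ 2 * Real.log (patternCount U T) *
            (1 / (((m:ℕ):ℝ) * ((m:ℕ):ℝ))) := by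
          apply mul_le_mul_of_nonneg_right _ (by positivity)
          exact mul_le_mul_of_nonneg_right step3 hlogT
      _ = (((m + 4 * D : ℕ) : ℝ) ^ 2 / ((m:ℕ) : ℝ) ^ 2) * Real.log (patternCount U T) := by
          rw [div_eq_mul_inv, pow_two, mul_inv]
          ring
  -- pass to the limit
  have htend : Filter.Tendsto (fun m' : ℕ => (((m' + 1 + 4 * D : ℕ) : ℝ) ^ 2 /
      ((m' + 1 : ℕ) : ℝ) ^ 2) * Real.log (patternCount U T)) atTop
      (nhds (Real.log (patternCount U T))) := by
    have h1 : Filter.Tendsto (fun m' : ℕ => ((m' + 1 : ℕ) : ℝ)) atTop atTop :=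
      tendsto_natCast_atTop_atTop.comp (tendsto_add_atTop_nat 1)
    have h2 : Filter.Tendsto (fun m' : ℕ => ((4 * D : ℕ) : ℝ) / ((m' + 1 : ℕ) : ℝ)) atTop
        (nhds 0) := Filter.Tendsto.div_atTop tendsto_const_nhds h1
    have h3 : Filter.Tendsto (fun m' : ℕ => (1 + ((4 * D : ℕ) : ℝ) / ((m' + 1 : ℕ) : ℝ)) ^ 2 *
        Real.log (patternCount U T)) atTop (nhds (Real.log (patternCount U T))) := by
      have := (((tendsto_const_nhds (x := (1:ℝ))).add h2).pow 2).mul_const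
        (Real.log (patternCount U T))
      simpa using this
    apply h3.congr
    intro m'
    have hm0 : ((m' + 1 : ℕ) : ℝ) ≠ 0 := by positivity
    have hrw : ((m' + 1 + 4 * D : ℕ) : ℝ) =
        ((m' + 1 : ℕ) : ℝ) * (1 + ((4 * D : ℕ) : ℝ) / ((m' + 1 : ℕ) : ℝ)) := by
      rw [mul_add, mul_one, mul_div_cancel₀ _ hm0]
      push_cast; ring
    rw [hrw, mul_pow, mul_comm (((m' + 1 : ℕ) : ℝ) ^ 2)]
    rw [mul_div_assoc, div_self (by positivity), mul_one]
  exact ge_of_tendsto htend (Filter.Eventually.of_forall key)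

end Tess

section Assemble
variable {A : Type*} [Fintype A] {U : Set ((ℤ × ℤ) → A)}

lemma log_pc_le2 (hne : U.Nonempty)
    (hinv : ∀ v : ℤ × ℤ, ∀ x ∈ U, (fun p => x (p + v)) ∈ U)
    {k l : ℕ} (hk : 1 ≤ k) (hl : 1 ≤ l) (L : Finset (ℤ × ℤ)) :
    Real.log (patternCount U L) ≤
      (L.card : ℝ) * ((1 / ((k:ℝ) * l)) * Real.log (patternCount U (Zrect k l (0, 0)))) +
      3 * ((k:ℝ) * l) * Real.log (Fintype.card A) * ((latBoundary L).card : ℝ) := by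
  have h1 := log_pc_le hne hinv hk hl L
  have hβ : (betaKL k l L : ℝ) ≤ 3 * ((k:ℝ) * l) * ((latBoundary L).card : ℝ) := by
    have := betaKL_le hk hl L
    push_cast
    exact_mod_cast this
  have hlogN : 0 ≤ Real.log (Fintype.card A) := by
    obtain ⟨x, hx⟩ := hne
    have : 1 ≤ Fintype.card A := Fintype.card_pos_iff.mpr ⟨x 0⟩
    exact Real.log_nonneg (by exact_mod_cast this)
  calc Real.log (patternCount U L)
      ≤ ((L.card : ℝ) / ((k : ℝ) * l)) * Real.log (patternCount U (Zrect k l (0, 0))) +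
        (betaKL k l L : ℝ) * Real.log (Fintype.card A) := h1
    _ ≤ (L.card : ℝ) * ((1 / ((k:ℝ) * l)) * Real.log (patternCount U (Zrect k l (0, 0)))) +
        3 * ((k:ℝ) * l) * Real.log (Fintype.card A) * ((latBoundary L).card : ℝ) := by
        apply add_le_add
        · apply le_of_eq; ring
        · calc (betaKL k l L : ℝ) * Real.log (Fintype.card A)
              ≤ (3 * ((k:ℝ) * l) * ((latBoundary L).card : ℝ)) * Real.log (Fintype.card A) :=
                mul_le_mul_of_nonneg_right hβ hlogN
            _ = _ := by ring

lemma an_upper (hne : U.Nonempty)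
    (hinv : ∀ v : ℤ × ℤ, ∀ x ∈ U, (fun p => x (p + v)) ∈ U)
    {k l : ℕ} (hk : 1 ≤ k) (hl : 1 ≤ l) (L : Finset (ℤ × ℤ)) (hL : 1 ≤ L.card) :
    (1 / (L.card : ℝ)) * Real.log (patternCount U L) ≤
      (1 / ((k:ℝ) * l)) * Real.log (patternCount U (Zrect k l (0, 0))) +
      3 * ((k:ℝ) * l) * Real.log (Fintype.card A) *
        (((latBoundary L).card : ℝ) / (L.card : ℝ)) := by
  have hcn : (0:ℝ) < (L.card : ℝ) := by exact_mod_cast hL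
  have h2 := log_pc_le2 hne hinv hk hl L
  have h3 := mul_le_mul_of_nonneg_left h2 (le_of_lt (one_div_pos.mpr hcn))
  refine le_trans h3 (le_of_eq ?_)
  field_simp

end Assemble

set_option maxHeartbeats 1600000 in
/-- Theorem 3.2: equality of entropies via tessellations. -/
theorem entropyAlong_eq_rectEntropy_of_tessellations {A : Type*} [Fintype A] [TopologicalSpace A]
    [DiscreteTopology A] (hcard : 2 ≤ Fintype.card A)
    (U : Set ((ℤ × ℤ) → A)) (hU : IsShiftSpace U)
    (Ω : ℕ → Finset (ℤ × ℤ)) (hΩ : IsExpandingSystem Ω)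
    (T : ℕ → Finset (ℤ × ℤ)) (hT : ∀ n, IsTessellation (T n)) (hsub : ∀ n, Ω n ⊂ T n)
    (hbd : Filter.limsup
      (fun n => ((latBoundary (Ω n)).card : ℝ) / ((Ω n).card : ℝ)) Filter.atTop = 0)
    (hbd' : Filter.limsup
      (fun n => ((latBoundary (T n \ Ω n)).card : ℝ) / (((T n \ Ω n).card : ℝ))) Filter.atTop = 0)
    (hsup : ∃ C : ℝ, ∀ n, ((T n \ Ω n).card : ℝ) / ((Ω n).card : ℝ) ≤ C) :
    entropyAlong U Ω = rectEntropy U := by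
  classical
  obtain ⟨hne, _, hinv⟩ := hU
  obtain ⟨hmono, _⟩ := hΩ
  obtain ⟨C, hC⟩ := hsup
  have hlogN : 0 ≤ Real.log (Fintype.card A) :=
    Real.log_nonneg (by exact_mod_cast le_trans one_le_two hcard)
  have hΩcard : ∀ n, n ≤ (Ω n).card := by
    intro n
    induction n with
    | zero => exact Nat.zero_le _
    | succ n ih => have := Finset.card_lt_card (hmono n); omega
  set a : ℕ → ℝ := fun n => (1 / ((Ω n).card : ℝ)) * Real.log (patternCount U (Ω n)) with ha
  have hent : entropyAlong U Ω = Filter.limsup a Filter.atTop := rfl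
  have ha_nonneg : ∀ n, 0 ≤ a n := by
    intro n
    have h1 := log_pc_nonneg hne (Ω n)
    have h0 : (0:ℝ) ≤ 1 / ((Ω n).card : ℝ) := by positivity
    exact mul_nonneg h0 h1
  have ha_le : ∀ n, a n ≤ Real.log (Fintype.card A) := by
    intro n
    rcases Nat.eq_zero_or_pos (Ω n).card with h0 | hpos
    · show (1 / ((Ω n).card : ℝ)) * Real.log (patternCount U (Ω n)) ≤ _
      rw [h0]
      simpa using hlogN
    · have hcn : (0:ℝ) < ((Ω n).card : ℝ) := by exact_mod_cast hpos
      show (1 / ((Ω n).card : ℝ)) * Real.log (patternCount U (Ω n)) ≤ _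
      have hlog : Real.log (patternCount U (Ω n)) ≤ ((Ω n).card : ℝ) *
          Real.log (Fintype.card A) := by
        calc Real.log (patternCount U (Ω n))
            ≤ Real.log ((Fintype.card A ^ (Ω n).card : ℕ) : ℝ) := by
              apply Real.log_le_log
              · exact_mod_cast one_le_pc hne (Ω n)
              · exact_mod_cast pc_le_pow (Ω n)
          _ = ((Ω n).card : ℝ) * Real.log (Fintype.card A) := by
              push_cast; rw [Real.log_pow]
      calc (1 / ((Ω n).card : ℝ)) * Real.log (patternCount U (Ω n))
          ≤ (1 / ((Ω n).card : ℝ)) * (((Ω n).card : ℝ) * Real.log (Fintype.card A)) :=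
            mul_le_mul_of_nonneg_left hlog (by positivity)
        _ = Real.log (Fintype.card A) := by field_simp
  have hbddA : Filter.IsBoundedUnder (· ≤ ·) Filter.atTop a :=
    ⟨Real.log (Fintype.card A), Filter.eventually_map.mpr (Filter.Eventually.of_forall ha_le)⟩
  have hcobdd : Filter.IsCoboundedUnder (· ≤ ·) Filter.atTop a :=
    Filter.IsBoundedUnder.isCoboundedUnder_le
      ⟨0, Filter.eventually_map.mpr (Filter.Eventually.of_forall ha_nonneg)⟩
  have hratio_bdd : ∀ (W : ℕ → Finset (ℤ × ℤ)),
      Filter.IsBoundedUnder (· ≤ ·) Filter.atTop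
        (fun n => ((latBoundary (W n)).card : ℝ) / ((W n).card : ℝ)) := by
    intro W
    refine ⟨1, Filter.eventually_map.mpr (Filter.Eventually.of_forall fun n => ?_)⟩
    rcases Nat.eq_zero_or_pos (W n).card with h0 | hpos
    · rw [h0]; simp
    · have h1 : ((latBoundary (W n)).card : ℝ) ≤ ((W n).card : ℝ) := by
        exact_mod_cast Finset.card_le_card (Finset.sdiff_subset (s := W n))
      have h2 : (0:ℝ) < ((W n).card : ℝ) := by exact_mod_cast hpos
      rw [div_le_one h2]
      exact h1
  -- PART 1 : entropyAlong ≤ rectEntropy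
  have part1 : entropyAlong U Ω ≤ rectEntropy U := by
    rw [hent, rectEntropy]
    apply le_ciInf
    rintro ⟨m0, n0⟩
    show Filter.limsup a Filter.atTop ≤ (1 / (((m0 + 1) * (n0 + 1) : ℕ) : ℝ)) *
      Real.log (patternCount U (Zrect (m0 + 1) (n0 + 1) (0, 0)))
    rw [show ((((m0 + 1) * (n0 + 1) : ℕ)) : ℝ) = ((m0 + 1 : ℕ) : ℝ) * ((n0 + 1 : ℕ) : ℝ) from
      by push_cast; ring]
    set c := (1 / (((m0 + 1 : ℕ) : ℝ) * ((n0 + 1 : ℕ) : ℝ))) *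
        Real.log (patternCount U (Zrect (m0 + 1) (n0 + 1) (0, 0))) with hcdef
    apply le_of_forall_pos_le_add
    intro ε hε
    set K := 3 * (((m0 + 1 : ℕ) : ℝ) * ((n0 + 1 : ℕ) : ℝ)) * Real.log (Fintype.card A) with hK
    have hK0 : 0 ≤ K := by rw [hK]; positivity
    set ε' := ε / (K + 1) with hε'def
    have hε' : 0 < ε' := by rw [hε'def]; positivity
    have hev : ∀ᶠ n in Filter.atTop,
        ((latBoundary (Ω n)).card : ℝ) / ((Ω n).card : ℝ) < ε' := by
      apply Filter.eventually_lt_of_limsup_lt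
      · rw [hbd]; exact hε'
      · exact hratio_bdd Ω
    have hev2 : ∀ᶠ n in Filter.atTop, a n ≤ c + ε := by
      filter_upwards [hev, Filter.eventually_ge_atTop 1] with n h1 h2
      have hLcard : 1 ≤ (Ω n).card := le_trans h2 (hΩcard n)
      have hup := an_upper hne hinv (k := m0 + 1) (l := n0 + 1) (by omega) (by omega)
        (Ω n) hLcard
      show (1 / ((Ω n).card : ℝ)) * Real.log (patternCount U (Ω n)) ≤ c + ε
      refine le_trans hup ?_
      rw [← hcdef, ← hK]
      apply add_le_add_right
      have hKε : K * ε' ≤ ε := by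
        have hx : ε' * (K + 1) = ε := div_mul_cancel₀ ε (by positivity)
        nlinarith [hε'.le]
      calc K * (((latBoundary (Ω n)).card : ℝ) / ((Ω n).card : ℝ))
          ≤ K * ε' := mul_le_mul_of_nonneg_left (le_of_lt h1) hK0
        _ ≤ ε := hKε
    exact Filter.limsup_le_of_le hcobdd hev2
  -- PART 2 : rectEntropy ≤ entropyAlong
  have hC0 : 0 ≤ C := by
    have h1 := hC 1
    have hcn : (0:ℝ) ≤ ((T 1 \ Ω 1).card : ℝ) / ((Ω 1).card : ℝ) := by positivity
    linarith
  have part2 : rectEntropy U ≤ entropyAlong U Ω := by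
    rw [hent]
    apply le_of_forall_pos_le_add
    intro δ hδ
    set δ1 := δ / (2 * (C + 1)) with hδ1def
    have hδ1 : 0 < δ1 := by rw [hδ1def]; positivity
    have hlt : rectEntropy U < rectEntropy U + δ1 := by linarith
    rw [rectEntropy] at hlt
    obtain ⟨⟨m0, n0⟩, hmn⟩ := exists_lt_of_ciInf_lt hlt
    set c := (1 / (((m0 + 1 : ℕ) : ℝ) * ((n0 + 1 : ℕ) : ℝ))) *
        Real.log (patternCount U (Zrect (m0 + 1) (n0 + 1) (0, 0))) with hcdef
    have hc_lt : c < rectEntropy U + δ1 := by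
      have hmn' : (1 / (((m0 + 1) * (n0 + 1) : ℕ) : ℝ)) *
          Real.log (patternCount U (Zrect (m0 + 1) (n0 + 1) (0, 0))) <
          rectEntropy U + δ1 := hmn
      rw [show ((((m0 + 1) * (n0 + 1) : ℕ)) : ℝ) = ((m0 + 1 : ℕ) : ℝ) * ((n0 + 1 : ℕ) : ℝ) from
        by push_cast; ring] at hmn'
      exact hmn'
    have hc_ge : rectEntropy U ≤ c := by
      have h1 : rectEntropy U ≤ (1 / (((m0 + 1) * (n0 + 1) : ℕ) : ℝ)) *
          Real.log (patternCount U (Zrect (m0 + 1) (n0 + 1) (0, 0))) :=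
        ciInf_le rect_bddBelow (m0, n0)
      rw [show ((((m0 + 1) * (n0 + 1) : ℕ)) : ℝ) = ((m0 + 1 : ℕ) : ℝ) * ((n0 + 1 : ℕ) : ℝ) from
        by push_cast; ring] at h1
      exact h1
    set K := 3 * (((m0 + 1 : ℕ) : ℝ) * ((n0 + 1 : ℕ) : ℝ)) * Real.log (Fintype.card A) with hK
    have hK0 : 0 ≤ K := by rw [hK]; positivity
    set ε2 := δ / (2 * (K * C + 1)) with hε2def
    have hε2 : 0 < ε2 := by rw [hε2def]; positivity
    have hev' : ∀ᶠ n in Filter.atTop,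
        ((latBoundary (T n \ Ω n)).card : ℝ) / (((T n \ Ω n).card : ℝ)) < ε2 := by
      apply Filter.eventually_lt_of_limsup_lt
      · rw [hbd']; exact hε2
      · exact hratio_bdd (fun n => T n \ Ω n)
    have hlow : ∀ᶠ n in Filter.atTop, rectEntropy U - δ ≤ a n := by
      filter_upwards [hev', Filter.eventually_ge_atTop 1] with n hrn hn1
      have hΩn1 : 1 ≤ (Ω n).card := le_trans hn1 (hΩcard n)
      have hcn : (0:ℝ) < ((Ω n).card : ℝ) := by exact_mod_cast hΩn1
      obtain ⟨w, hwT, hwΩ⟩ := Finset.exists_of_ssubset (hsub n)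
      have hW'ne : (T n \ Ω n).Nonempty := ⟨w, Finset.mem_sdiff.mpr ⟨hwT, hwΩ⟩⟩
      have hW'card : 1 ≤ (T n \ Ω n).card := Finset.card_pos.mpr hW'ne
      have hc'n : (0:ℝ) < ((T n \ Ω n).card : ℝ) := by exact_mod_cast hW'card
      have htess : ((T n).card : ℝ) * rectEntropy U ≤ Real.log (patternCount U (T n)) :=
        tess_le hne hinv (T n) (hT n)
      have hsplit : Real.log (patternCount U (T n)) ≤
          Real.log (patternCount U (Ω n)) + Real.log (patternCount U (T n \ Ω n)) := by
        have hunion : T n = Ω n ∪ (T n \ Ω n) :=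
          (Finset.union_sdiff_of_subset (hsub n).subset).symm
        calc Real.log (patternCount U (T n))
            ≤ Real.log ((patternCount U (Ω n) * patternCount U (T n \ Ω n) : ℕ) : ℝ) := by
              apply Real.log_le_log
              · exact_mod_cast one_le_pc hne (T n)
              · have := pc_union_le (U := U) (Ω n) (T n \ Ω n)
                rw [← hunion] at this
                exact_mod_cast this
          _ = Real.log (patternCount U (Ω n)) + Real.log (patternCount U (T n \ Ω n)) := by
              push_cast
              apply Real.log_mul
              · have := one_le_pc hne (Ω n)
                have : (1:ℝ) ≤ (patternCount U (Ω n) : ℝ) := by exact_mod_cast this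
                linarith
              · have := one_le_pc hne (T n \ Ω n)
                have : (1:ℝ) ≤ (patternCount U (T n \ Ω n) : ℝ) := by exact_mod_cast this
                linarith
      have hW' : Real.log (patternCount U (T n \ Ω n)) ≤
          ((T n \ Ω n).card : ℝ) * c + K * ((latBoundary (T n \ Ω n)).card : ℝ) := by
        have h1 := log_pc_le2 hne hinv (k := m0 + 1) (l := n0 + 1) (by omega) (by omega)
          (T n \ Ω n)
        rw [hcdef, hK]
        refine le_trans h1 (le_of_eq ?_)
        push_cast
        ring
      have hcards : ((T n).card : ℝ) = ((Ω n).card : ℝ) + ((T n \ Ω n).card : ℝ) := by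
        have h1 := Finset.card_sdiff_add_card_eq_card (hsub n).subset
        exact_mod_cast (by omega : (T n).card = (Ω n).card + (T n \ Ω n).card)
      have hlog_low : (((Ω n).card : ℝ) + ((T n \ Ω n).card : ℝ)) * rectEntropy U -
          (((T n \ Ω n).card : ℝ) * c + K * ((latBoundary (T n \ Ω n)).card : ℝ)) ≤
          Real.log (patternCount U (Ω n)) := by
        rw [← hcards]
        linarith
      have hstep : rectEntropy U - (((T n \ Ω n).card : ℝ) / ((Ω n).card : ℝ)) * δ1 -
          K * (((latBoundary (T n \ Ω n)).card : ℝ) / ((Ω n).card : ℝ)) ≤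
          (1 / ((Ω n).card : ℝ)) * Real.log (patternCount U (Ω n)) := by
        have hmul := mul_le_mul_of_nonneg_left hlog_low (le_of_lt (one_div_pos.mpr hcn))
        have heq : (1 / ((Ω n).card : ℝ)) *
            ((((Ω n).card : ℝ) + ((T n \ Ω n).card : ℝ)) * rectEntropy U -
              (((T n \ Ω n).card : ℝ) * c + K * ((latBoundary (T n \ Ω n)).card : ℝ))) =
            rectEntropy U +
              (((T n \ Ω n).card : ℝ) / ((Ω n).card : ℝ)) * (rectEntropy U - c) -
              K * (((latBoundary (T n \ Ω n)).card : ℝ) / ((Ω n).card : ℝ)) := by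
          field_simp
          ring
        rw [heq] at hmul
        refine le_trans ?_ hmul
        have hr0 : 0 ≤ ((T n \ Ω n).card : ℝ) / ((Ω n).card : ℝ) := by positivity
        have h1 : -δ1 ≤ rectEntropy U - c := by linarith
        have h2 := mul_le_mul_of_nonneg_left h1 hr0
        nlinarith [h2]
      show rectEntropy U - δ ≤ (1 / ((Ω n).card : ℝ)) * Real.log (patternCount U (Ω n))
      refine le_trans ?_ hstep
      have hratio := hC n
      have hratio0 : 0 ≤ ((T n \ Ω n).card : ℝ) / ((Ω n).card : ℝ) := by positivity
      have hbound1 : (((T n \ Ω n).card : ℝ) / ((Ω n).card : ℝ)) * δ1 ≤ δ / 2 := by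
        have hCδ : C * δ1 ≤ δ / 2 := by
          have hx : δ1 * (2 * (C + 1)) = δ := div_mul_cancel₀ δ (by positivity)
          nlinarith [hδ1.le]
        have := mul_le_mul_of_nonneg_right hratio hδ1.le
        linarith
      have hbound2 : K * (((latBoundary (T n \ Ω n)).card : ℝ) / ((Ω n).card : ℝ)) ≤ δ / 2 := by
        have hsn : (((latBoundary (T n \ Ω n)).card : ℝ) / ((Ω n).card : ℝ)) =
            (((latBoundary (T n \ Ω n)).card : ℝ) / ((T n \ Ω n).card : ℝ)) *
            (((T n \ Ω n).card : ℝ) / ((Ω n).card : ℝ)) := by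
          field_simp
        rw [hsn]
        have hprod : (((latBoundary (T n \ Ω n)).card : ℝ) / ((T n \ Ω n).card : ℝ)) *
            (((T n \ Ω n).card : ℝ) / ((Ω n).card : ℝ)) ≤ ε2 * C :=
          mul_le_mul (le_of_lt hrn) hratio hratio0 hε2.le
        have h3 : K * ((((latBoundary (T n \ Ω n)).card : ℝ) / ((T n \ Ω n).card : ℝ)) *
            (((T n \ Ω n).card : ℝ) / ((Ω n).card : ℝ))) ≤ K * (ε2 * C) :=
          mul_le_mul_of_nonneg_left hprod hK0
        have hx : ε2 * (2 * (K * C + 1)) = δ := div_mul_cancel₀ δ (by positivity)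
        nlinarith [hε2.le]
      linarith
    have hlim : rectEntropy U - δ ≤ Filter.limsup a Filter.atTop :=
      Filter.le_limsup_of_frequently_le hlow.frequently hbddA
    linarith
  exact le_antisymm part1 part2
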